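/- In the field ℚ(s,a,b,z) of rational functions, set α = (a-b)², β = (a+b)², x(z) = s·(α·z² - β)/(z² - 1), and Y(z) = -(α-β)·z/(2s·(α·z² - β)). Then Y(z)² = 1/(4s²) - (a²+b²)/(2s·x(z)) + (a²-b²)²/(4·x(z)²). In other words, (x(z), Y(z)) is a rational parameterization of the dessin spectral curve y² = 1/(4s²) - (u+v)/(2sx) + (u-v)²/(4x²) with u = a², v = b². -/
import Mathlib


noncomputable section

/-- The field `ℚ(s,a,b,z)` of rational functions in four indeterminates over `ℚ`. -/
abbrev F4 : Type := FractionRing (MvPolynomial (Fin 4) ℚ)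

def fs : F4 := algebraMap (MvPolynomial (Fin 4) ℚ) F4 (MvPolynomial.X 0)
def fa : F4 := algebraMap (MvPolynomial (Fin 4) ℚ) F4 (MvPolynomial.X 1)
def fb : F4 := algebraMap (MvPolynomial (Fin 4) ℚ) F4 (MvPolynomial.X 2)
def fz : F4 := algebraMap (MvPolynomial (Fin 4) ℚ) F4 (MvPolynomial.X 3)

lemma map_ne_zero_of_eval {p : MvPolynomial (Fin 4) ℚ} (f : Fin 4 → ℚ)
    (h : MvPolynomial.eval f p ≠ 0) :
    algebraMap (MvPolynomial (Fin 4) ℚ) F4 p ≠ 0 := by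
  intro hp
  apply h
  have : p = 0 := by
    have := IsFractionRing.injective (MvPolynomial (Fin 4) ℚ) F4
    exact this (by simpa using hp)
  simp [this]

set_option maxHeartbeats 1000000

lemma hs : fs ≠ 0 := by
  apply map_ne_zero_of_eval (fun _ => 1); simp

lemma hz2 : fz ^ 2 - 1 ≠ 0 := by
  have : fz ^ 2 - 1 = algebraMap (MvPolynomial (Fin 4) ℚ) F4 ((MvPolynomial.X 3) ^ 2 - 1) := by
    simp [fz, map_sub, map_pow]
  rw [this]
  apply map_ne_zero_of_eval (fun _ => 0); simp

lemma hden : (fa - fb) ^ 2 * fz ^ 2 - (fa + fb) ^ 2 ≠ 0 := by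
  have : (fa - fb) ^ 2 * fz ^ 2 - (fa + fb) ^ 2
      = algebraMap (MvPolynomial (Fin 4) ℚ) F4
        ((MvPolynomial.X 1 - MvPolynomial.X 2) ^ 2 * (MvPolynomial.X 3) ^ 2
          - (MvPolynomial.X 1 + MvPolynomial.X 2) ^ 2) := by
    simp [fa, fb, fz, map_sub, map_add, map_mul, map_pow]
  rw [this]
  apply map_ne_zero_of_eval (fun i => if i = 1 then 1 else 0)
  simp

/-- `(x(z), Y(z))` with `x(z) = s(αz²-β)/(z²-1)` and `Y(z) = -(α-β)z/(2s(αz²-β))`,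
`α = (a-b)²`, `β = (a+b)²`, is a rational parameterization of the dessin spectral curve
`y² = 1/(4s²) - (u+v)/(2sx) + (u-v)²/(4x²)` with `u = a²`, `v = b²`. -/
theorem dessin_spectral_curve_parameterization :
    (-( ((fa - fb) ^ 2 - (fa + fb) ^ 2) * fz) /
        (2 * fs * ((fa - fb) ^ 2 * fz ^ 2 - (fa + fb) ^ 2))) ^ 2
      = 1 / (4 * fs ^ 2)
        - (fa ^ 2 + fb ^ 2) /
            (2 * fs * (fs * ((fa - fb) ^ 2 * fz ^ 2 - (fa + fb) ^ 2) / (fz ^ 2 - 1)))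
        + (fa ^ 2 - fb ^ 2) ^ 2 /
            (4 * (fs * ((fa - fb) ^ 2 * fz ^ 2 - (fa + fb) ^ 2) / (fz ^ 2 - 1)) ^ 2) := by
  have h1 := hs
  have h2 := hz2
  have h3 := hden
  have hx : fs * ((fa - fb) ^ 2 * fz ^ 2 - (fa + fb) ^ 2) / (fz ^ 2 - 1) ≠ 0 :=
    div_ne_zero (mul_ne_zero h1 h3) h2
  have h4 : (2:F4) ≠ 0 := two_ne_zero
  have h5 : (4:F4) ≠ 0 := by norm_num
  have hq1 : 4 * fs ^ 2 ≠ 0 := mul_ne_zero h5 (pow_ne_zero 2 h1)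
  have hq2 : 2 * fs * (fs * ((fa - fb) ^ 2 * fz ^ 2 - (fa + fb) ^ 2) / (fz ^ 2 - 1)) ≠ 0 :=
    mul_ne_zero (mul_ne_zero h4 h1) hx
  have hq3 : 4 * (fs * ((fa - fb) ^ 2 * fz ^ 2 - (fa + fb) ^ 2) / (fz ^ 2 - 1)) ^ 2 ≠ 0 :=
    mul_ne_zero h5 (pow_ne_zero 2 hx)
  have hd : 2 * fs * ((fa - fb) ^ 2 * fz ^ 2 - (fa + fb) ^ 2) ≠ 0 :=
    mul_ne_zero (mul_ne_zero h4 h1) h3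
  rw [div_pow, div_sub_div _ _ hq1 hq2, div_add_div _ _ (mul_ne_zero hq1 hq2) hq3,
    div_eq_div_iff (pow_ne_zero 2 hd) (mul_ne_zero (mul_ne_zero hq1 hq2) hq3)]
  field_simp
  ring

end
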